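/- Let E be a real inner product space, let λ > 0 be a real number, let t ≥ 1 be a natural number, and let w_t, x_t ∈ E and y_t ∈ ℝ with y_t = 1 or y_t = −1. Assume the sample is badly classified: y_t·⟪w_t, x_t⟫ < 1. Define w_{t+1} = (1 − 1/t)·w_t + (1/(λt))·(y_t·x_t). Then ‖w_{t+1}‖² ≤ ‖w_t‖² + 2/(λt) + ‖x_t‖²/(λ²t²). -/

import Mathlib

open RealInnerProductSpace

theorem p2pegasos_upper_step {E : Type*} [NormedAddCommGroup E] [InnerProductSpace ℝ E]
    (lam : ℝ) (hlam : 0 < lam) (t : ℕ) (ht : 1 ≤ t)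
    (wt xt : E) (yt : ℝ) (hy : yt = 1 ∨ yt = -1)
    (hbad : yt * ⟪wt, xt⟫ < 1) :
    ‖(1 - 1/(t : ℝ)) • wt + (1/(lam * t)) • (yt • xt)‖^2 ≤
      ‖wt‖^2 + 2/(lam * t) + ‖xt‖^2/(lam^2 * t^2) := by
  have ht1 : (1 : ℝ) ≤ (t : ℝ) := by exact_mod_cast ht
  have ht0 : (0 : ℝ) < (t : ℝ) := by linarith
  have htinv : (0 : ℝ) ≤ 1 - 1/(t : ℝ) := by
    have : 1/(t : ℝ) ≤ 1 := by rw [div_le_one ht0]; exact ht1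
    linarith
  have htinv' : 1 - 1/(t : ℝ) ≤ 1 := by
    have : 0 ≤ 1/(t : ℝ) := by positivity
    linarith
  have hinvpos : (0 : ℝ) < 1/(lam * t) := by positivity
  rw [norm_add_sq_real, norm_smul, norm_smul, norm_smul,
    real_inner_smul_left, real_inner_smul_right]
  have e1 : (‖(1 - 1/(t:ℝ))‖ * ‖wt‖)^2 ≤ ‖wt‖^2 := by
    rw [Real.norm_eq_abs, abs_of_nonneg htinv, mul_pow]
    have h : (1 - 1/(t:ℝ))^2 ≤ 1 := by nlinarith
    calc (1 - 1/(t:ℝ))^2 * ‖wt‖^2 ≤ 1 * ‖wt‖^2 :=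
          mul_le_mul_of_nonneg_right h (sq_nonneg _)
      _ = ‖wt‖^2 := one_mul _
  have e2 : 2 * ((1 - 1/(t:ℝ)) * (1/(lam * t) * ⟪wt, yt • xt⟫)) ≤ 2/(lam * t) := by
    rw [real_inner_smul_right]
    have hc : (1 - 1/(t:ℝ)) * (yt * ⟪wt, xt⟫) ≤ 1 := by
      rcases lt_or_ge (yt * ⟪wt, xt⟫) 0 with h | h
      · nlinarith
      · nlinarith
    have h2 := mul_le_mul_of_nonneg_left hc hinvpos.le
    have hr : 2 * ((1 - 1/(t:ℝ)) * (1/(lam * t) * (yt * ⟪wt, xt⟫)))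
        = 2 * (1/(lam * t) * ((1 - 1/(t:ℝ)) * (yt * ⟪wt, xt⟫))) := by ring
    have hr2 : 2/(lam * t) = 2 * (1/(lam * t) * 1) := by ring
    rw [hr, hr2]
    linarith [h2]
  have hyabs : ‖yt‖ = 1 := by rcases hy with h | h <;> rw [h] <;> norm_num
  have e3 : (‖1/(lam * (t:ℝ))‖ * (‖yt‖ * ‖xt‖))^2 = ‖xt‖^2/(lam^2 * (t:ℝ)^2) := by
    rw [hyabs, Real.norm_eq_abs, abs_of_pos hinvpos]
    field_simp
    try ring
    try exact Or.inl trivial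
  linarith [e1, e2, e3.le, e3.ge]
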